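/- Fix m > 0, ξ ∈ ℝ³ \ {0}, and set τ = (|ξ|²/ω²)(m − √(m² − ω²)) for 0 < ω < m, η = ξ₂ + i·ξ₁. Then the 4×4 Hermitian matrix K = (1/(|ξ|²(ω² + |ξ|²))) · [[2m+τ, 0, ξ₃, conj(η)], [0, 2m+τ, η, −ξ₃], [ξ₃, conj(η), τ, 0], [η, −ξ₃, 0, τ]] is positive definite. -/

import Mathlib

open scoped ComplexOrder

open Matrix in
private lemma aux_key_stmt7 (m τ ξ₁ ξ₂ ξ₃ : ℝ) (x : Fin 4 → ℂ) :
    (τ:ℂ) * (star x ⬝ᵥ (!![(2 * m + τ : ℂ), 0, (ξ₃ : ℂ), starRingEnd ℂ ((ξ₂:ℂ) + Complex.I * ξ₁);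
       0, (2 * m + τ : ℂ), ((ξ₂:ℂ) + Complex.I * ξ₁), -(ξ₃ : ℂ);
       (ξ₃ : ℂ), starRingEnd ℂ ((ξ₂:ℂ) + Complex.I * ξ₁), (τ : ℂ), 0;
       ((ξ₂:ℂ) + Complex.I * ξ₁), -(ξ₃ : ℂ), 0, (τ : ℂ)]).mulVec x)
    = ((ξ₃:ℂ) * x 0 + starRingEnd ℂ ((ξ₂:ℂ) + Complex.I * ξ₁) * x 1 + (τ:ℂ) * x 2) *
        starRingEnd ℂ ((ξ₃:ℂ) * x 0 + starRingEnd ℂ ((ξ₂:ℂ) + Complex.I * ξ₁) * x 1 + (τ:ℂ) * x 2)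
      + (((ξ₂:ℂ) + Complex.I * ξ₁) * x 0 - (ξ₃:ℂ) * x 1 + (τ:ℂ) * x 3) *
        starRingEnd ℂ (((ξ₂:ℂ) + Complex.I * ξ₁) * x 0 - (ξ₃:ℂ) * x 1 + (τ:ℂ) * x 3)
      + ((τ * (2 * m + τ) - (ξ₁^2 + ξ₂^2 + ξ₃^2) : ℝ) : ℂ) *
          (x 0 * starRingEnd ℂ (x 0) + x 1 * starRingEnd ℂ (x 1)) := by
  simp [Matrix.mulVec, dotProduct, Fin.sum_univ_four, _root_.map_add, _root_.map_mul,
    _root_.map_sub, Complex.conj_ofReal, Complex.conj_I]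
  linear_combination (x 0 * starRingEnd ℂ (x 0) + x 1 * starRingEnd ℂ (x 1)) * ξ₁^2 * Complex.I_sq

open Matrix in
private lemma aux_posdef_stmt7 (m τ ξ₁ ξ₂ ξ₃ c : ℝ) (hc : 0 < c) (hτ : 0 < τ)
    (hkey : ξ₁ ^ 2 + ξ₂ ^ 2 + ξ₃ ^ 2 < τ * (2 * m + τ)) :
    (((c:ℝ):ℂ) • !![(2 * m + τ : ℂ), 0, (ξ₃ : ℂ), starRingEnd ℂ ((ξ₂:ℂ) + Complex.I * ξ₁);
       0, (2 * m + τ : ℂ), ((ξ₂:ℂ) + Complex.I * ξ₁), -(ξ₃ : ℂ);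
       (ξ₃ : ℂ), starRingEnd ℂ ((ξ₂:ℂ) + Complex.I * ξ₁), (τ : ℂ), 0;
       ((ξ₂:ℂ) + Complex.I * ξ₁), -(ξ₃ : ℂ), 0, (τ : ℂ)]).PosDef := by
  set M : Matrix (Fin 4) (Fin 4) ℂ :=
    !![(2 * m + τ : ℂ), 0, (ξ₃ : ℂ), starRingEnd ℂ ((ξ₂:ℂ) + Complex.I * ξ₁);
       0, (2 * m + τ : ℂ), ((ξ₂:ℂ) + Complex.I * ξ₁), -(ξ₃ : ℂ);
       (ξ₃ : ℂ), starRingEnd ℂ ((ξ₂:ℂ) + Complex.I * ξ₁), (τ : ℂ), 0;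
       ((ξ₂:ℂ) + Complex.I * ξ₁), -(ξ₃ : ℂ), 0, (τ : ℂ)] with hM
  rw [Matrix.posDef_iff_dotProduct_mulVec]
  constructor
  · show (((c:ℝ):ℂ) • M)ᴴ = ((c:ℝ):ℂ) • M
    ext i j
    fin_cases i <;> fin_cases j <;>
      simp [hM, Matrix.conjTranspose_apply, _root_.map_add, _root_.map_mul,
        Complex.conj_ofReal, Complex.conj_I]
  · intro x hx
    have hevalsmul : star x ⬝ᵥ (((c:ℝ):ℂ) • M).mulVec x = (c:ℂ) * (star x ⬝ᵥ M.mulVec x) := by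
      rw [Matrix.smul_mulVec, dotProduct_smul, smul_eq_mul]
    set w2 : ℂ := (ξ₃:ℂ) * x 0 + starRingEnd ℂ ((ξ₂:ℂ) + Complex.I * ξ₁) * x 1 + (τ:ℂ) * x 2 with hw2
    set w3 : ℂ := ((ξ₂:ℂ) + Complex.I * ξ₁) * x 0 - (ξ₃:ℂ) * x 1 + (τ:ℂ) * x 3 with hw3
    set d : ℝ := τ * (2 * m + τ) - (ξ₁^2 + ξ₂^2 + ξ₃^2) with hd
    have hdpos : 0 < d := by rw [hd]; linarith
    set R : ℝ := Complex.normSq w2 + Complex.normSq w3 +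
      d * (Complex.normSq (x 0) + Complex.normSq (x 1)) with hR
    have hRpos : 0 < R := by
      rcases Classical.em (x 0 = 0 ∧ x 1 = 0) with h0 | h0
      · obtain ⟨i, hi⟩ : ∃ i, x i ≠ 0 := by
          by_contra h; push_neg at h; exact hx (funext h)
        have h23 : Complex.normSq w2 + Complex.normSq w3 > 0 := by
          fin_cases i
          · exact absurd h0.1 hi
          · exact absurd h0.2 hi
          · have hw : w2 = (τ:ℂ) * x 2 := by rw [hw2, h0.1, h0.2]; ring
            have : 0 < Complex.normSq w2 := by
              rw [hw]; exact Complex.normSq_pos.mpr (mul_ne_zero (by exact_mod_cast hτ.ne') hi)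
            have := Complex.normSq_nonneg w3
            linarith
          · have hw : w3 = (τ:ℂ) * x 3 := by rw [hw3, h0.1, h0.2]; ring
            have : 0 < Complex.normSq w3 := by
              rw [hw]; exact Complex.normSq_pos.mpr (mul_ne_zero (by exact_mod_cast hτ.ne') hi)
            have := Complex.normSq_nonneg w2
            linarith
        have : 0 ≤ d * (Complex.normSq (x 0) + Complex.normSq (x 1)) :=
          mul_nonneg hdpos.le (add_nonneg (Complex.normSq_nonneg _) (Complex.normSq_nonneg _))
        rw [hR]; linarith
      · have h01 : 0 < Complex.normSq (x 0) + Complex.normSq (x 1) := by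
          rcases not_and_or.mp h0 with h | h
          · have := Complex.normSq_pos.mpr h
            have := Complex.normSq_nonneg (x 1); linarith
          · have := Complex.normSq_pos.mpr h
            have := Complex.normSq_nonneg (x 0); linarith
        have := mul_pos hdpos h01
        have := Complex.normSq_nonneg w2
        have := Complex.normSq_nonneg w3
        rw [hR]; linarith
    have hQ : star x ⬝ᵥ M.mulVec x = ((R / τ : ℝ) : ℂ) := by
      apply mul_left_cancel₀ (show (τ:ℂ) ≠ 0 from by exact_mod_cast hτ.ne')
      rw [hM] at *
      rw [aux_key_stmt7 m τ ξ₁ ξ₂ ξ₃ x, ← Complex.ofReal_mul, mul_div_cancel₀ _ hτ.ne', hR]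
      push_cast
      simp only [← Complex.mul_conj]
      rw [hw2, hw3, hd]
      push_cast
      ring
    rw [hevalsmul, hQ]
    have h1 : (0:ℂ) < (c:ℂ) := by exact_mod_cast hc
    have h2 : (0:ℂ) < ((R / τ : ℝ) : ℂ) := by
      rw [Complex.zero_lt_real]; exact div_pos hRpos hτ
    exact mul_pos h1 h2

/-- The 4×4 Hermitian matrix `K(ω,ξ)` from the threshold classification. -/
noncomputable def diracKernelMatrix (m ω ξ₁ ξ₂ ξ₃ : ℝ) : Matrix (Fin 4) (Fin 4) ℂ :=
  let normξsq : ℝ := ξ₁ ^ 2 + ξ₂ ^ 2 + ξ₃ ^ 2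
  let τ : ℝ := normξsq / ω ^ 2 * (m - Real.sqrt (m ^ 2 - ω ^ 2))
  let η : ℂ := ξ₂ + Complex.I * ξ₁
  (((1 / (normξsq * (ω ^ 2 + normξsq)) : ℝ) : ℂ)) •
    !![(2 * m + τ : ℂ), 0, (ξ₃ : ℂ), starRingEnd ℂ η;
       0, (2 * m + τ : ℂ), η, -(ξ₃ : ℂ);
       (ξ₃ : ℂ), starRingEnd ℂ η, (τ : ℂ), 0;
       η, -(ξ₃ : ℂ), 0, (τ : ℂ)]

theorem stmt_7 (m ω ξ₁ ξ₂ ξ₃ : ℝ) (hm : 0 < m) (hω : 0 < ω) (hωm : ω < m)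
    (hξ : ¬(ξ₁ = 0 ∧ ξ₂ = 0 ∧ ξ₃ = 0)) :
    (diracKernelMatrix m ω ξ₁ ξ₂ ξ₃).PosDef := by
  have hξ' : ξ₁ ≠ 0 ∨ ξ₂ ≠ 0 ∨ ξ₃ ≠ 0 := by tauto
  have hs : 0 < ξ₁ ^ 2 + ξ₂ ^ 2 + ξ₃ ^ 2 := by
    rcases hξ' with h | h | h <;>
      nlinarith [sq_nonneg ξ₁, sq_nonneg ξ₂, sq_nonneg ξ₃, pow_pos (abs_pos.mpr h) 2,
        sq_abs ξ₁, sq_abs ξ₂, sq_abs ξ₃]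
  have hmm2 : 0 ≤ m ^ 2 - ω ^ 2 := by nlinarith
  have h2m : (0:ℝ) < 2 * m := by linarith
  have h2mq : 2 * m * (ω ^ 2 / (2 * m)) = ω ^ 2 := by field_simp
  have hnn : 0 ≤ m - ω ^ 2 / (2 * m) := by
    rw [sub_nonneg, div_le_iff₀ h2m]; nlinarith
  have hrle : Real.sqrt (m ^ 2 - ω ^ 2) ≤ m - ω ^ 2 / (2 * m) := by
    rw [show m - ω ^ 2 / (2 * m) = Real.sqrt ((m - ω ^ 2 / (2 * m)) ^ 2) from
      (Real.sqrt_sq hnn).symm]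
    exact Real.sqrt_le_sqrt (by nlinarith [sq_nonneg (ω ^ 2 / (2 * m))])
  set τv : ℝ := (ξ₁ ^ 2 + ξ₂ ^ 2 + ξ₃ ^ 2) / ω ^ 2 * (m - Real.sqrt (m ^ 2 - ω ^ 2)) with hτv
  have hq : 0 < ω ^ 2 / (2 * m) := by positivity
  have hmr : ω ^ 2 / (2 * m) ≤ m - Real.sqrt (m ^ 2 - ω ^ 2) := by linarith
  have hsdiv : 0 < (ξ₁ ^ 2 + ξ₂ ^ 2 + ξ₃ ^ 2) / ω ^ 2 := div_pos hs (by positivity)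
  have hτpos : 0 < τv := mul_pos hsdiv (lt_of_lt_of_le hq hmr)
  have hkey : ξ₁ ^ 2 + ξ₂ ^ 2 + ξ₃ ^ 2 < τv * (2 * m + τv) := by
    have h1 : (ξ₁ ^ 2 + ξ₂ ^ 2 + ξ₃ ^ 2) / ω ^ 2 * (ω ^ 2 / (2 * m)) ≤ τv :=
      mul_le_mul_of_nonneg_left hmr hsdiv.le
    have h2 : (ξ₁ ^ 2 + ξ₂ ^ 2 + ξ₃ ^ 2) / ω ^ 2 * (ω ^ 2 / (2 * m))
        = (ξ₁ ^ 2 + ξ₂ ^ 2 + ξ₃ ^ 2) / (2 * m) := by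
      field_simp
    have h3 : ξ₁ ^ 2 + ξ₂ ^ 2 + ξ₃ ^ 2 ≤ 2 * m * τv := by
      rw [h2, div_le_iff₀ h2m] at h1; linarith [h1]
    nlinarith [mul_pos hτpos hτpos]
  have hc : 0 < 1 / ((ξ₁ ^ 2 + ξ₂ ^ 2 + ξ₃ ^ 2) * (ω ^ 2 + (ξ₁ ^ 2 + ξ₂ ^ 2 + ξ₃ ^ 2))) := by
    positivity
  exact aux_posdef_stmt7 m τv ξ₁ ξ₂ ξ₃ _ hc hτpos hkey
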